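/- Fix k > 0. For every φ ≥ k, ∫_k^φ (ln μ − ln k) dμ ≥ 2 (√φ − √k)². -/

import Mathlib

open Real intervalIntegral

theorem stmt_8 (k φ : ℝ) (hk : 0 < k) (hφ : k ≤ φ) :
    2 * (Real.sqrt φ - Real.sqrt k) ^ 2 ≤
      ∫ μ in k..φ, (Real.log μ - Real.log k) := by
  have hφ0 : 0 < φ := hk.trans_le hφ
  have h0 : (0:ℝ) ∉ Set.uIcc k φ := by
    rw [Set.uIcc_of_le hφ]
    intro h; exact absurd h.1 (not_le.mpr hk)
  have key : ∀ μ ∈ Set.uIcc k φ,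
      2 - 2 * Real.sqrt k * μ ^ (-(1/2) : ℝ) ≤ Real.log μ - Real.log k := by
    intro μ hμ
    rw [Set.uIcc_of_le hφ] at hμ
    have hμ0 : 0 < μ := lt_of_lt_of_le hk hμ.1
    have hs : 0 < Real.sqrt μ := Real.sqrt_pos.mpr hμ0
    have hsk : 0 < Real.sqrt k := Real.sqrt_pos.mpr hk
    have h1 : Real.log (Real.sqrt k / Real.sqrt μ) ≤ Real.sqrt k / Real.sqrt μ - 1 :=
      Real.log_le_sub_one_of_pos (by positivity)
    rw [Real.log_div hsk.ne' hs.ne', Real.log_sqrt hk.le, Real.log_sqrt hμ0.le] at h1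
    have hrpow : μ ^ (-(1/2) : ℝ) = 1 / Real.sqrt μ := by
      rw [Real.rpow_neg hμ0.le, Real.sqrt_eq_rpow]; norm_num
    rw [hrpow]
    have : 2 * Real.sqrt k * (1 / Real.sqrt μ) = 2 * (Real.sqrt k / Real.sqrt μ) := by
      ring
    rw [this]
    linarith
  -- integrability
  have hcont1 : ContinuousOn (fun μ : ℝ => Real.log μ - Real.log k) (Set.uIcc k φ) := by
    apply ContinuousOn.sub
    · exact fun x hx => (Real.continuousAt_log (by
        intro h; exact h0 (h ▸ hx))).continuousWithinAt
    · exact continuousOn_const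
  have hcont2 : ContinuousOn (fun μ : ℝ => 2 - 2 * Real.sqrt k * μ ^ (-(1/2) : ℝ))
      (Set.uIcc k φ) := by
    apply ContinuousOn.sub continuousOn_const
    apply ContinuousOn.mul continuousOn_const
    exact fun x hx => (Real.continuousAt_rpow_const x _
      (Or.inl (by intro h; exact h0 (h ▸ hx)))).continuousWithinAt
  have hint1 : IntervalIntegrable (fun μ : ℝ => Real.log μ - Real.log k)
      MeasureTheory.volume k φ := hcont1.intervalIntegrable
  have hint2 : IntervalIntegrable (fun μ : ℝ => 2 - 2 * Real.sqrt k * μ ^ (-(1/2) : ℝ))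
      MeasureTheory.volume k φ := hcont2.intervalIntegrable
  have hmono := intervalIntegral.integral_mono_on hφ hint2 hint1
    (fun μ hμ => key μ (by rw [Set.uIcc_of_le hφ]; exact hμ))
  -- compute the lower integral
  have hcomp : (∫ μ in k..φ, (2 - 2 * Real.sqrt k * μ ^ (-(1/2) : ℝ))) =
      2 * (Real.sqrt φ - Real.sqrt k) ^ 2 := by
    have hintc : IntervalIntegrable (fun _ : ℝ => (2:ℝ)) MeasureTheory.volume k φ :=
      intervalIntegrable_const
    have hintr : IntervalIntegrable (fun μ : ℝ => μ ^ (-(1/2) : ℝ)) MeasureTheory.volume k φ :=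
      (intervalIntegral.intervalIntegrable_rpow (Or.inr h0))
    rw [intervalIntegral.integral_sub hintc (hintr.const_mul _),
      intervalIntegral.integral_const_mul, integral_rpow (Or.inr ⟨by norm_num, h0⟩),
      intervalIntegral.integral_const]
    have h1 : φ ^ (-(1/2) + 1 : ℝ) = Real.sqrt φ := by
      rw [show (-(1/2) + 1 : ℝ) = 1/2 by norm_num, ← Real.sqrt_eq_rpow]
    have h2 : k ^ (-(1/2) + 1 : ℝ) = Real.sqrt k := by
      rw [show (-(1/2) + 1 : ℝ) = 1/2 by norm_num, ← Real.sqrt_eq_rpow]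
    rw [h1, h2]
    have hsφ : Real.sqrt φ ^ 2 = φ := Real.sq_sqrt hφ0.le
    have hsk : Real.sqrt k ^ 2 = k := Real.sq_sqrt hk.le
    have hskφ : Real.sqrt k * Real.sqrt φ = Real.sqrt k * Real.sqrt φ := rfl
    field_simp
    rw [smul_eq_mul]
    nlinarith [hsφ, hsk]
  linarith [hmono, hcomp ▸ hmono]
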